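/- Let H ≥ 0, λ > 0, 1 < p < ∞ and Y₀, Y₁ ∈ ℝ. Let Y : [0,∞) → ℝ be a global weak solution of D_t²Y − H²Y + λ|Y|^p = 0 with data (Y₀, Y₁), i.e., Y and |Y|^p are locally integrable on [0,∞) and for every twice continuously differentiable compactly supported function φ : [0,∞) → ℝ one has −Y₁φ(0) + Y₀(D_tφ)(0) + ∫₀^∞ ( Y(t)·(D_t²φ)(t) − H²Y(t)·φ(t) + λ|Y(t)|^p·φ(t) ) dt = 0. If HY₀ + Y₁ ≤ 0, then Y = 0 almost everywhere on [0,∞). -/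

import Mathlib

open MeasureTheory Set
open scoped ContDiff

noncomputable def st11eta (x : ℝ) : ℝ := 1 - Real.smoothTransition (x - 1)

lemma st11eta_contDiff : ContDiff ℝ ∞ st11eta := by
  have h : ContDiff ℝ ∞ fun x : ℝ => Real.smoothTransition (x - 1) :=
    (Real.smoothTransition.contDiff (n := ⊤)).comp (contDiff_id.sub contDiff_const)
  exact contDiff_const.sub h

lemma st11eta_nonneg (x : ℝ) : 0 ≤ st11eta x := by
  simp [st11eta, Real.smoothTransition.le_one]

lemma st11eta_le_one (x : ℝ) : st11eta x ≤ 1 := by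
  simp [st11eta, Real.smoothTransition.nonneg]

lemma st11eta_eq_one {x : ℝ} (h : x ≤ 1) : st11eta x = 1 := by
  simp [st11eta, Real.smoothTransition.zero_of_nonpos (by linarith : x - 1 ≤ 0)]

lemma st11eta_eq_zero {x : ℝ} (h : 2 ≤ x) : st11eta x = 0 := by
  simp [st11eta, Real.smoothTransition.one_of_one_le (by linarith : 1 ≤ x - 1)]

noncomputable def st11eta1 : ℝ → ℝ := deriv st11eta
noncomputable def st11eta2 : ℝ → ℝ := deriv st11eta1

lemma st11eta1_contDiff : ContDiff ℝ ∞ st11eta1 :=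
  (contDiff_infty_iff_deriv.mp st11eta_contDiff).2

lemma st11eta2_contDiff : ContDiff ℝ ∞ st11eta2 :=
  (contDiff_infty_iff_deriv.mp st11eta1_contDiff).2

lemma st11eta_hasDerivAt (x : ℝ) : HasDerivAt st11eta (st11eta1 x) x :=
  ((st11eta_contDiff.differentiable (by norm_num)) x).hasDerivAt

lemma st11eta1_hasDerivAt (x : ℝ) : HasDerivAt st11eta1 (st11eta2 x) x :=
  ((st11eta1_contDiff.differentiable (by norm_num)) x).hasDerivAt

lemma st11eta1_zero {x : ℝ} (h : x < 1 ∨ 2 < x) : st11eta1 x = 0 := by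
  have : st11eta =ᶠ[nhds x] fun _ => (if x < 1 then (1:ℝ) else 0) := by
    rcases h with h | h
    · filter_upwards [Iio_mem_nhds h] with y hy
      simp [st11eta_eq_one (le_of_lt hy), if_pos h]
    · filter_upwards [Ioi_mem_nhds h] with y hy
      simp [st11eta_eq_zero (le_of_lt hy), if_neg (by linarith : ¬ x < 1)]
  rw [st11eta1, this.deriv_eq, deriv_const]

lemma st11eta2_zero {x : ℝ} (h : x < 1 ∨ 2 < x) : st11eta2 x = 0 := by
  have : st11eta1 =ᶠ[nhds x] fun _ => (0:ℝ) := by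
    rcases h with h | h
    · filter_upwards [Iio_mem_nhds h] with y hy
      exact st11eta1_zero (Or.inl hy)
    · filter_upwards [Ioi_mem_nhds h] with y hy
      exact st11eta1_zero (Or.inr hy)
  rw [st11eta2, this.deriv_eq, deriv_const]

lemma st11_exists_bound : ∃ M : ℝ, 0 ≤ M ∧ ∀ x, |st11eta1 x| ≤ M ∧ |st11eta2 x| ≤ M := by
  obtain ⟨C1, hC1⟩ := (isCompact_Icc (a := (0:ℝ)) (b := 3)).exists_bound_of_continuousOn
    st11eta1_contDiff.continuous.continuousOn
  obtain ⟨C2, hC2⟩ := (isCompact_Icc (a := (0:ℝ)) (b := 3)).exists_bound_of_continuousOn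
    st11eta2_contDiff.continuous.continuousOn
  refine ⟨max (max C1 C2) 0, le_max_right _ _, fun x => ?_⟩
  by_cases hx : x ∈ Icc (0:ℝ) 3
  · have h1 := hC1 x hx
    have h2 := hC2 x hx
    rw [Real.norm_eq_abs] at h1 h2
    exact ⟨h1.trans (le_max_of_le_left (le_max_left _ _)),
      h2.trans (le_max_of_le_left (le_max_right _ _))⟩
  · simp only [mem_Icc, not_and_or, not_le] at hx
    have h : x < 1 ∨ 2 < x := by
      rcases hx with h | h
      · exact Or.inl (by linarith)
      · exact Or.inr (by linarith)
    rw [st11eta1_zero h, st11eta2_zero h]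
    simp
noncomputable def st11u (R : ℝ) (m : ℕ) (t : ℝ) : ℝ := (st11eta (t / R)) ^ m

noncomputable def st11u1 (R : ℝ) (m : ℕ) (t : ℝ) : ℝ :=
  (m : ℝ) * (st11eta (t / R)) ^ (m - 1) * st11eta1 (t / R) / R

noncomputable def st11u2 (R : ℝ) (m : ℕ) (t : ℝ) : ℝ :=
  ((m : ℝ) * ((m : ℝ) - 1) * (st11eta (t / R)) ^ (m - 2) * (st11eta1 (t / R)) ^ 2
    + (m : ℝ) * (st11eta (t / R)) ^ (m - 1) * st11eta2 (t / R)) / R ^ 2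

lemma st11u_contDiff (R : ℝ) (m : ℕ) : ContDiff ℝ ∞ (st11u R m) :=
  (st11eta_contDiff.comp (contDiff_id.div_const R)).pow m

lemma st11_comp_hasDerivAt (R t : ℝ) :
    HasDerivAt (fun s => st11eta (s / R)) (st11eta1 (t / R) * (1 / R)) t :=
  HasDerivAt.comp (h₂ := st11eta) (h := fun s => s / R) t (st11eta_hasDerivAt (t / R))
    ((hasDerivAt_id t).div_const R)

lemma st11_comp1_hasDerivAt (R t : ℝ) :
    HasDerivAt (fun s => st11eta1 (s / R)) (st11eta2 (t / R) * (1 / R)) t :=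
  (st11eta1_hasDerivAt (t / R)).comp t ((hasDerivAt_id t).div_const R)

lemma st11u_hasDerivAt (R : ℝ) {m : ℕ} (hm : 2 ≤ m) (t : ℝ) :
    HasDerivAt (st11u R m) (st11u1 R m t) t := by
  have h := ((st11_comp_hasDerivAt R t).pow m)
  refine h.congr_deriv ?_
  unfold st11u1
  ring

lemma st11u1_hasDerivAt {R : ℝ} (hR : R ≠ 0) {m : ℕ} (hm : 2 ≤ m) (t : ℝ) :
    HasDerivAt (st11u1 R m) (st11u2 R m t) t := by
  have hpow : HasDerivAt (fun s => (st11eta (s / R)) ^ (m - 1))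
      ((↑(m - 1) : ℝ) * (st11eta (t / R)) ^ (m - 1 - 1) * (st11eta1 (t / R) * (1 / R))) t :=
    (st11_comp_hasDerivAt R t).pow (m - 1)
  have h := ((hpow.mul (st11_comp1_hasDerivAt R t)).const_mul (m : ℝ)).div_const R
  have heq : st11u1 R m = fun s => (m : ℝ) *
      ((st11eta (s / R)) ^ (m - 1) * st11eta1 (s / R)) / R := by
    funext s; unfold st11u1; ring
  rw [heq]
  refine h.congr_deriv ?_
  unfold st11u2
  have h1 : m - 1 - 1 = m - 2 := by omega
  have h2 : ((m - 1 : ℕ) : ℝ) = (m : ℝ) - 1 := by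
    have : (1:ℕ) ≤ m := by omega
    push_cast [Nat.cast_sub this]
    ring
  rw [h1, h2]
  field_simp

lemma st11u1_zero {R : ℝ} (hR : 0 < R) (m : ℕ) {t : ℝ} (ht : t < R ∨ 2 * R < t) :
    st11u1 R m t = 0 := by
  have : st11eta1 (t / R) = 0 := by
    apply st11eta1_zero
    rcases ht with h | h
    · exact Or.inl ((div_lt_one hR).mpr h)
    · exact Or.inr (by rw [lt_div_iff₀ hR]; linarith)
  simp [st11u1, this]

lemma st11u2_zero {R : ℝ} (hR : 0 < R) (m : ℕ) {t : ℝ} (ht : t < R ∨ 2 * R < t) :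
    st11u2 R m t = 0 := by
  have h : t / R < 1 ∨ 2 < t / R := by
    rcases ht with h | h
    · exact Or.inl ((div_lt_one hR).mpr h)
    · exact Or.inr (by rw [lt_div_iff₀ hR]; linarith)
  simp [st11u2, st11eta1_zero h, st11eta2_zero h]

lemma st11u_eq_one {R : ℝ} (hR : 0 < R) (m : ℕ) {t : ℝ} (ht : t ≤ R) : st11u R m t = 1 := by
  rw [st11u, st11eta_eq_one ((div_le_one hR).mpr ht), one_pow]

lemma st11u_eq_zero {R : ℝ} (hR : 0 < R) {m : ℕ} (hm : 2 ≤ m) {t : ℝ} (ht : 2 * R ≤ t) :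
    st11u R m t = 0 := by
  rw [st11u, st11eta_eq_zero (by rw [le_div_iff₀ hR]; linarith), zero_pow (by omega)]

lemma st11u_nonneg (R : ℝ) (m : ℕ) (t : ℝ) : 0 ≤ st11u R m t :=
  pow_nonneg (st11eta_nonneg _) m

lemma st11u_le_one (R : ℝ) (m : ℕ) (t : ℝ) : st11u R m t ≤ 1 :=
  pow_le_one₀ (st11eta_nonneg _) (st11eta_le_one _)

noncomputable def st11F (H R : ℝ) (m : ℕ) (t : ℝ) : ℝ := Real.exp (-H * t) * st11u R m t

noncomputable def st11F1 (H R : ℝ) (m : ℕ) (t : ℝ) : ℝ :=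
  Real.exp (-H * t) * (-H * st11u R m t + st11u1 R m t)

noncomputable def st11F2 (H R : ℝ) (m : ℕ) (t : ℝ) : ℝ :=
  Real.exp (-H * t) * (H ^ 2 * st11u R m t - 2 * H * st11u1 R m t + st11u2 R m t)

lemma st11exp_hasDerivAt (H t : ℝ) :
    HasDerivAt (fun s => Real.exp (-H * s)) (-H * Real.exp (-H * t)) t := by
  have h := ((hasDerivAt_id t).const_mul (-H)).exp
  refine h.congr_deriv ?_
  show Real.exp (-H * t) * (-H * 1) = _; ring

lemma st11F_hasDerivAt (H : ℝ) {R : ℝ} (hR : R ≠ 0) {m : ℕ} (hm : 2 ≤ m) (t : ℝ) :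
    HasDerivAt (st11F H R m) (st11F1 H R m t) t := by
  have h := (st11exp_hasDerivAt H t).mul (st11u_hasDerivAt R hm t)
  refine h.congr_deriv ?_
  unfold st11F1
  ring

lemma st11F1_hasDerivAt (H : ℝ) {R : ℝ} (hR : R ≠ 0) {m : ℕ} (hm : 2 ≤ m) (t : ℝ) :
    HasDerivAt (st11F1 H R m) (st11F2 H R m t) t := by
  have h := (st11exp_hasDerivAt H t).mul
    (((st11u_hasDerivAt R hm t).const_mul (-H)).add (st11u1_hasDerivAt hR hm t))
  refine h.congr_deriv ?_
  unfold st11F2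
  simp only [Pi.add_apply]
  ring
noncomputable def st11phi (H R : ℝ) (m : ℕ) (t : ℝ) : ℝ := st11F H R m t * st11eta (-t)

lemma st11F_contDiff (H R : ℝ) (m : ℕ) : ContDiff ℝ ∞ (st11F H R m) := by
  have h1 : ContDiff ℝ ∞ fun t : ℝ => Real.exp (-H * t) :=
    Real.contDiff_exp.comp (contDiff_const.mul contDiff_id)
  exact h1.mul (st11u_contDiff R m)

lemma st11phi_contDiff (H R : ℝ) (m : ℕ) : ContDiff ℝ 2 (st11phi H R m) := by
  have h2 : ContDiff ℝ ∞ fun t : ℝ => st11eta (-t) := st11eta_contDiff.comp contDiff_neg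
  exact ((st11F_contDiff H R m).mul h2).of_le (by norm_cast)

lemma st11phi_compactSupport {R : ℝ} (hR : 0 < R) (H : ℝ) {m : ℕ} (hm : 2 ≤ m) :
    HasCompactSupport (st11phi H R m) := by
  apply HasCompactSupport.intro (isCompact_Icc (a := (-2:ℝ)) (b := 2 * R))
  intro x hx
  simp only [mem_Icc, not_and_or, not_le] at hx
  rcases hx with h | h
  · have : st11eta (-x) = 0 := st11eta_eq_zero (by linarith)
    simp [st11phi, this]
  · have : st11u R m x = 0 := st11u_eq_zero hR hm (le_of_lt h)
    simp [st11phi, st11F, this]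

lemma st11phi_eqF (H R : ℝ) (m : ℕ) {t : ℝ} (ht : -1 < t) :
    st11phi H R m t = st11F H R m t := by
  rw [st11phi, st11eta_eq_one (by linarith), mul_one]

lemma st11phi_deriv (H : ℝ) {R : ℝ} (hR : R ≠ 0) {m : ℕ} (hm : 2 ≤ m) {t : ℝ} (ht : -1 < t) :
    deriv (st11phi H R m) t = st11F1 H R m t := by
  have hev : st11phi H R m =ᶠ[nhds t] st11F H R m := by
    filter_upwards [Ioi_mem_nhds ht] with y hy
    exact st11phi_eqF H R m hy
  rw [hev.deriv_eq, (st11F_hasDerivAt H hR hm t).deriv]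

lemma st11phi_deriv2 (H : ℝ) {R : ℝ} (hR : R ≠ 0) {m : ℕ} (hm : 2 ≤ m) {t : ℝ} (ht : -1 < t) :
    deriv (deriv (st11phi H R m)) t = st11F2 H R m t := by
  have hev : deriv (st11phi H R m) =ᶠ[nhds t] st11F1 H R m := by
    filter_upwards [Ioi_mem_nhds ht] with y hy
    exact st11phi_deriv H hR hm hy
  rw [hev.deriv_eq, (st11F1_hasDerivAt H hR hm t).deriv]

lemma st11phi_zero {R : ℝ} (hR : 0 < R) (H : ℝ) (m : ℕ) : st11phi H R m 0 = 1 := by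
  rw [st11phi_eqF H R m (by norm_num), st11F, st11u_eq_one hR m (by linarith)]
  simp

lemma st11phi_deriv_zero {R : ℝ} (hR : 0 < R) (H : ℝ) {m : ℕ} (hm : 2 ≤ m) :
    deriv (st11phi H R m) 0 = -H := by
  rw [st11phi_deriv H (ne_of_gt hR) hm (by norm_num), st11F1,
    st11u_eq_one hR m (by linarith), st11u1_zero hR m (Or.inl hR)]
  simp

lemma st11F_nonneg (H R : ℝ) (m : ℕ) (t : ℝ) : 0 ≤ st11F H R m t :=
  mul_nonneg (Real.exp_nonneg _) (st11u_nonneg R m t)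

lemma st11F_continuous (H R : ℝ) (m : ℕ) : Continuous (st11F H R m) :=
  (st11F_contDiff H R m).continuous

noncomputable def st11G (H R : ℝ) (m : ℕ) (t : ℝ) : ℝ :=
  Real.exp (-H * t) * (st11u2 R m t - 2 * H * st11u1 R m t)

lemma st11G_eq (H R : ℝ) (m : ℕ) (t : ℝ) :
    st11G H R m t = st11F2 H R m t - H ^ 2 * st11F H R m t := by
  unfold st11G st11F2 st11F
  ring

lemma st11G_continuous (H R : ℝ) (m : ℕ) : Continuous (st11G H R m) := by
  have h1 : Continuous fun t : ℝ => Real.exp (-H * t) :=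
    Real.continuous_exp.comp (continuous_const.mul continuous_id)
  have he : Continuous fun t : ℝ => st11eta (t / R) :=
    st11eta_contDiff.continuous.comp (continuous_id.div_const R)
  have he1 : Continuous fun t : ℝ => st11eta1 (t / R) :=
    st11eta1_contDiff.continuous.comp (continuous_id.div_const R)
  have he2 : Continuous fun t : ℝ => st11eta2 (t / R) :=
    st11eta2_contDiff.continuous.comp (continuous_id.div_const R)
  have hu1 : Continuous (st11u1 R m) := by
    unfold st11u1
    exact ((continuous_const.mul (he.pow _)).mul he1).div_const R
  have hu2 : Continuous (st11u2 R m) := by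
    unfold st11u2
    exact ((((continuous_const.mul (he.pow _)).mul (he1.pow 2)).add
      ((continuous_const.mul (he.pow _)).mul he2)).div_const (R ^ 2))
  exact h1.mul (hu2.sub (continuous_const.mul hu1))

lemma st11G_zero {R : ℝ} (hR : 0 < R) (H : ℝ) (m : ℕ) {t : ℝ} (ht : 2 * R < t) :
    st11G H R m t = 0 := by
  rw [st11G, st11u1_zero hR m (Or.inr ht), st11u2_zero hR m (Or.inr ht)]
  ring
lemma st11_integrable_aux {Z : ℝ → ℝ} (hloc : LocallyIntegrableOn Z (Ici (0:ℝ)))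
    {g : ℝ → ℝ} (hg : Continuous g) {A : ℝ} (hA : 0 < A) (hgz : ∀ t, A ≤ t → g t = 0) :
    IntegrableOn (fun t => Z t * g t) (Ici (0:ℝ)) := by
  have h1 : IntegrableOn Z (Icc 0 A) :=
    hloc.integrableOn_compact_subset Icc_subset_Ici_self isCompact_Icc
  have h2 : IntegrableOn (fun t => Z t * g t) (Icc 0 A) :=
    h1.mul_continuousOn hg.continuousOn isCompact_Icc
  have h3 : IntegrableOn (fun t => Z t * g t) (Ioi A) := by
    rw [integrableOn_congr_fun (g := fun _ => (0:ℝ)) (fun t ht => by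
      rw [hgz t (le_of_lt ht), mul_zero]) measurableSet_Ioi]
    exact integrableOn_zero
  refine (h2.union h3).mono_set fun x hx => ?_
  rcases le_or_gt x A with h | h
  · exact Or.inl ⟨hx, h⟩
  · exact Or.inr h
set_option maxHeartbeats 1000000 in
lemma st11_pointwise {H lam p q M c : ℝ} (hH : 0 ≤ H) (hlam : 0 < lam)
    (hpq : p.HolderConjugate q) (hM : 0 ≤ M)
    (hMb : ∀ x, |st11eta1 x| ≤ M ∧ |st11eta2 x| ≤ M)
    (hc : 0 < c) (hcp : c ^ p = lam * p / 2)
    {m : ℕ} (hm3 : 3 ≤ m) (hmp : (m:ℝ) / p ≤ (m:ℝ) - 2)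
    {R : ℝ} (hR : 1 ≤ R) (Z : ℝ) {t : ℝ} (ht : 0 ≤ t) :
    |Z * st11G H R m t| ≤ lam / 2 * (|Z| ^ p * st11F H R m t)
      + Set.indicator (Icc R (2*R))
          (fun _ => ((m:ℝ)^2*(M+1)^2 * (1+H) / (R*c))^q / q) t := by
  have hm : 2 ≤ m := by omega
  have hR0 : (0:ℝ) < R := lt_of_lt_of_le one_pos hR
  have hp0 : (0:ℝ) < p := hpq.pos
  have hq0 : (0:ℝ) < q := hpq.symm.pos
  have hterm1 : 0 ≤ lam / 2 * (|Z| ^ p * st11F H R m t) := by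
    apply mul_nonneg (by positivity)
    exact mul_nonneg (Real.rpow_nonneg (abs_nonneg _) p) (st11F_nonneg H R m t)
  by_cases hmem : t ∈ Icc R (2*R)
  swap
  · have hor : t < R ∨ 2*R < t := by
      simp only [mem_Icc, not_and_or, not_le] at hmem
      exact hmem
    rw [Set.indicator_of_notMem hmem, st11G, st11u1_zero hR0 m hor,
      st11u2_zero hR0 m hor]
    simpa using hterm1
  · rw [Set.indicator_of_mem hmem]
    set e := st11eta (t/R) with he_def
    set e1 := st11eta1 (t/R) with he1_def
    set e2 := st11eta2 (t/R) with he2_def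
    have he0 : 0 ≤ e := st11eta_nonneg _
    have he1le : e ≤ 1 := st11eta_le_one _
    have hpow2 : (0:ℝ) ≤ e^(m-2) := pow_nonneg he0 _
    have hm1 : e^(m-1) ≤ e^(m-2) := by
      have h : m - 1 = (m-2) + 1 := by omega
      rw [h, pow_succ]
      nlinarith
    have hm1' : (0:ℝ) ≤ e^(m-1) := pow_nonneg he0 _
    obtain ⟨hM1, hM2⟩ := hMb (t/R)
    rw [← he1_def] at hM1
    rw [← he2_def] at hM2
    have hm2 : (2:ℝ) ≤ (m:ℝ) := by exact_mod_cast hm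
    have hae : |e| = e := abs_of_nonneg he0
    have haR : |R| = R := abs_of_pos hR0
    have ham1 : |(m:ℝ) - 1| = (m:ℝ) - 1 := abs_of_nonneg (by linarith)
    set K0 : ℝ := (m:ℝ)^2*(M+1)^2 with hK0_def
    have hK0 : (0:ℝ) < K0 := by
      rw [hK0_def]
      have h1 : (0:ℝ) < (m:ℝ) := by linarith
      have h2 : (0:ℝ) < M + 1 := by linarith
      positivity
    -- bound on u1
    have habs1 : |st11u1 R m t| ≤ (m:ℝ) * e^(m-2) * M / R := by
      rw [st11u1, ← he_def, ← he1_def]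
      simp only [abs_div, abs_mul, abs_pow, hae, haR, Nat.abs_cast]
      gcongr <;> first | positivity | exact hm1 | exact hM1
    -- bound on u2
    have habs2 : |st11u2 R m t| ≤ ((m:ℝ)*((m:ℝ)-1)*M^2 + (m:ℝ)*M) * e^(m-2) / R^2 := by
      rw [st11u2, ← he_def, ← he1_def, ← he2_def, abs_div, abs_pow, haR]
      gcongr ?_ / _
      calc |(m:ℝ)*((m:ℝ)-1)*e^(m-2)*e1^2 + (m:ℝ)*e^(m-1)*e2|
          ≤ |(m:ℝ)*((m:ℝ)-1)*e^(m-2)*e1^2| + |(m:ℝ)*e^(m-1)*e2| := abs_add_le _ _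
        _ = (m:ℝ)*((m:ℝ)-1)*e^(m-2)*|e1|^2 + (m:ℝ)*e^(m-1)*|e2| := by
            simp only [abs_mul, abs_pow, hae, ham1, Nat.abs_cast]
        _ ≤ (m:ℝ)*((m:ℝ)-1)*e^(m-2)*M^2 + (m:ℝ)*e^(m-2)*M := by
            have h1 : |e1|^2 ≤ M^2 := pow_le_pow_left₀ (abs_nonneg _) hM1 2
            have hmnn : (0:ℝ) ≤ (m:ℝ) := by linarith
            have h2a : (m:ℝ)*e^(m-1)*|e2| ≤ (m:ℝ)*e^(m-2)*|e2| :=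
              mul_le_mul_of_nonneg_right (mul_le_mul_of_nonneg_left hm1 hmnn) (abs_nonneg _)
            have h2b : (m:ℝ)*e^(m-2)*|e2| ≤ (m:ℝ)*e^(m-2)*M :=
              mul_le_mul_of_nonneg_left hM2 (mul_nonneg hmnn hpow2)
            have hmonn : (0:ℝ) ≤ (m:ℝ)*((m:ℝ)-1)*e^(m-2) :=
              mul_nonneg (mul_nonneg hmnn (by linarith)) hpow2
            have h3 : (m:ℝ)*((m:ℝ)-1)*e^(m-2)*|e1|^2 ≤ (m:ℝ)*((m:ℝ)-1)*e^(m-2)*M^2 :=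
              mul_le_mul_of_nonneg_left h1 hmonn
            linarith
        _ = ((m:ℝ)*((m:ℝ)-1)*M^2 + (m:ℝ)*M) * e^(m-2) := by ring
    -- combined bound on G
    have hGabs : |st11G H R m t| ≤ Real.exp (-H*t) * (K0 * (1+H) / R * e^(m-2)) := by
      rw [st11G, abs_mul, abs_of_nonneg (Real.exp_nonneg _)]
      gcongr
      calc |st11u2 R m t - 2*H*st11u1 R m t|
          ≤ |st11u2 R m t| + 2*H*|st11u1 R m t| := by
            refine (abs_sub _ _).trans ?_
            rw [abs_mul, abs_of_nonneg (by positivity : (0:ℝ) ≤ 2*H)]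
        _ ≤ ((m:ℝ)*((m:ℝ)-1)*M^2 + (m:ℝ)*M) * e^(m-2) / R^2
            + 2*H*((m:ℝ) * e^(m-2) * M / R) := by gcongr
        _ ≤ K0 * (1+H) / R * e^(m-2) := by
            have hA : ((m:ℝ)*((m:ℝ)-1)*M^2 + (m:ℝ)*M) * e^(m-2) / R^2
                ≤ K0 / R * e^(m-2) := by
              rw [div_le_iff₀ (by positivity : (0:ℝ) < R^2)]
              have hnum : ((m:ℝ)*((m:ℝ)-1)*M^2 + (m:ℝ)*M) ≤ K0 := by
                rw [hK0_def]
                nlinarith [mul_nonneg (mul_nonneg (by linarith : (0:ℝ) ≤ (m:ℝ))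
                    (by linarith : (0:ℝ) ≤ (m:ℝ) - 1)) hM,
                  mul_nonneg (mul_nonneg (by linarith : (0:ℝ) ≤ (m:ℝ))
                    (by linarith : (0:ℝ) ≤ (m:ℝ))) hM,
                  mul_nonneg (by linarith : (0:ℝ) ≤ (m:ℝ)) (mul_nonneg hM hM),
                  sq_nonneg ((m:ℝ))]
              have : K0 / R * e^(m-2) * R^2 = K0 * e^(m-2) * R := by
                field_simp
              rw [this]
              nlinarith [mul_nonneg (mul_nonneg hK0.le hpow2) (by linarith : (0:ℝ) ≤ R - 1)]
            have hB : 2*H*((m:ℝ) * e^(m-2) * M / R) ≤ K0 * H / R * e^(m-2) := by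
              have h2m : 2*(m:ℝ)*M ≤ K0 := by
                rw [hK0_def]
                nlinarith [mul_nonneg (mul_nonneg (by linarith : (0:ℝ) ≤ (m:ℝ))
                    (by linarith : (0:ℝ) ≤ (m:ℝ) - 1)) hM,
                  mul_nonneg (by linarith : (0:ℝ) ≤ (m:ℝ)) (mul_nonneg hM hM),
                  sq_nonneg ((m:ℝ)), mul_nonneg (mul_nonneg (by linarith : (0:ℝ) ≤ (m:ℝ))
                    (by linarith : (0:ℝ) ≤ (m:ℝ))) hM]
              have step1 : 2*(m:ℝ)*M * e^(m-2) ≤ K0 * e^(m-2) :=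
                mul_le_mul_of_nonneg_right h2m hpow2
              have step2 : 2*(m:ℝ)*M * e^(m-2) * H ≤ K0 * e^(m-2) * H :=
                mul_le_mul_of_nonneg_right step1 hH
              have step3 : 2*(m:ℝ)*M * e^(m-2) * H / R ≤ K0 * e^(m-2) * H / R :=
                div_le_div_of_nonneg_right step2 hR0.le |>.trans_eq rfl
              calc 2*H*((m:ℝ) * e^(m-2) * M / R) = 2*(m:ℝ)*M * e^(m-2) * H / R := by ring
                _ ≤ K0 * e^(m-2) * H / R := step3
                _ = K0 * H / R * e^(m-2) := by ring
            calc ((m:ℝ)*((m:ℝ)-1)*M^2 + (m:ℝ)*M) * e^(m-2) / R^2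
                + 2*H*((m:ℝ) * e^(m-2) * M / R)
                ≤ K0 / R * e^(m-2) + K0 * H / R * e^(m-2) := add_le_add hA hB
              _ = K0 * (1+H) / R * e^(m-2) := by ring
    -- step: e^(m-2) ≤ u^(1/p)
    have hmne : m ≠ 0 := by omega
    have hm2ne : m - 2 ≠ 0 := by omega
    have hEu : e^(m-2) ≤ (st11u R m t) ^ (1/p) := by
      rcases he0.eq_or_lt with h0 | h0
      · rw [st11u, ← he_def, ← h0, zero_pow hm2ne,
          zero_pow hmne, Real.zero_rpow (by positivity : 1/p ≠ 0)]
      · have h1 : st11u R m t = e ^ (m:ℝ) := by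
          rw [st11u, ← he_def, ← Real.rpow_natCast]
        rw [h1, ← Real.rpow_natCast e (m-2), ← Real.rpow_mul he0]
        have hcast : ((m - 2 : ℕ) : ℝ) = (m:ℝ) - 2 := by
          push_cast [Nat.cast_sub hm]
          ring
        rw [hcast]
        apply Real.rpow_le_rpow_of_exponent_ge h0 he1le
        calc (m:ℝ) * (1/p) = (m:ℝ)/p := by ring
          _ ≤ (m:ℝ) - 2 := hmp
    have hu0 : 0 ≤ st11u R m t := st11u_nonneg R m t
    have hup : (0:ℝ) ≤ (st11u R m t) ^ (1/p) := Real.rpow_nonneg hu0 _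
    have hexple : Real.exp (-H*t) ≤ 1 := Real.exp_le_one_iff.mpr (by nlinarith)
    have hDnn : 0 ≤ (K0 * (1+H) / (R*c))^q / q := by positivity
    -- Young's inequality part
    have hyoung : (c * (|Z| * (st11u R m t)^(1/p))) * (K0*(1+H)/(R*c))
        ≤ lam/2 * (|Z|^p * st11u R m t) + (K0*(1+H)/(R*c))^q / q := by
      have ha : 0 ≤ c * (|Z| * (st11u R m t)^(1/p)) := by positivity
      have hb : (0:ℝ) ≤ K0*(1+H)/(R*c) := by positivity
      refine (Real.young_inequality_of_nonneg ha hb hpq).trans ?_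
      have hap : (c * (|Z| * (st11u R m t)^(1/p)))^p = (lam*p/2) * (|Z|^p * st11u R m t) := by
        rw [Real.mul_rpow hc.le (by positivity), Real.mul_rpow (abs_nonneg _) hup,
          one_div, Real.rpow_inv_rpow hu0 (ne_of_gt hp0), hcp]
      rw [hap]
      have : lam * p / 2 * (|Z| ^ p * st11u R m t) / p = lam/2 * (|Z|^p * st11u R m t) := by
        field_simp
      rw [this]
    -- final chain
    calc |Z * st11G H R m t| = |Z| * |st11G H R m t| := abs_mul _ _
      _ ≤ |Z| * (Real.exp (-H*t) * (K0*(1+H)/R * e^(m-2))) :=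
          mul_le_mul_of_nonneg_left hGabs (abs_nonneg _)
      _ ≤ |Z| * (Real.exp (-H*t) * (K0*(1+H)/R * (st11u R m t)^(1/p))) := by
          have hco : (0:ℝ) ≤ K0*(1+H)/R := div_nonneg (mul_nonneg hK0.le (by linarith)) hR0.le
          exact mul_le_mul_of_nonneg_left (mul_le_mul_of_nonneg_left
            (mul_le_mul_of_nonneg_left hEu hco) (Real.exp_nonneg _)) (abs_nonneg _)
      _ = Real.exp (-H*t) * ((c * (|Z| * (st11u R m t)^(1/p))) * (K0*(1+H)/(R*c))) := by
          have hccancel : K0*(1+H)/R = c * (K0*(1+H)/(R*c)) := by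
            field_simp
          rw [hccancel]
          ring
      _ ≤ Real.exp (-H*t) * (lam/2 * (|Z|^p * st11u R m t) + (K0*(1+H)/(R*c))^q / q) := by
          apply mul_le_mul_of_nonneg_left hyoung (Real.exp_nonneg _)
      _ = lam/2 * (|Z|^p * (Real.exp (-H*t) * st11u R m t))
          + Real.exp (-H*t) * ((K0*(1+H)/(R*c))^q / q) := by ring
      _ ≤ lam/2 * (|Z|^p * st11F H R m t) + (K0*(1+H)/(R*c))^q / q := by
          rw [st11F]
          nlinarith [mul_nonneg (Real.rpow_nonneg (abs_nonneg Z) p)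
            (mul_nonneg (Real.exp_nonneg (-H*t)) hu0)]
set_option maxHeartbeats 1000000 in
lemma st11_key {H lam p q M c : ℝ} (hH : 0 ≤ H) (hlam : 0 < lam)
    (hpq : p.HolderConjugate q) (hM : 0 ≤ M)
    (hMb : ∀ x, |st11eta1 x| ≤ M ∧ |st11eta2 x| ≤ M)
    (hc : 0 < c) (hcp : c ^ p = lam * p / 2)
    {m : ℕ} (hm3 : 3 ≤ m) (hmp : (m:ℝ) / p ≤ (m:ℝ) - 2)
    {Y₀ Y₁ : ℝ} {Y : ℝ → ℝ}
    (hloc : LocallyIntegrableOn Y (Ici (0 : ℝ)))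
    (hlocp : LocallyIntegrableOn (fun t => |Y t| ^ p) (Ici (0 : ℝ)))
    (hweak : ∀ φ : ℝ → ℝ, ContDiff ℝ 2 φ → HasCompactSupport φ →
      -Y₁ * φ 0 + Y₀ * deriv φ 0 +
        ∫ t in Ici (0 : ℝ),
          (Y t * deriv (deriv φ) t - H ^ 2 * Y t * φ t + lam * |Y t| ^ p * φ t) = 0)
    (hdata : H * Y₀ + Y₁ ≤ 0)
    {R : ℝ} (hR : 1 ≤ R) :
    ∫ t in Ici (0:ℝ), |Y t| ^ p * st11F H R m t
      ≤ (2/lam) * ((((m:ℝ)^2*(M+1)^2*(1+H)/c)^q / q)) * R^(1-q) := by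
  have hm : 2 ≤ m := by omega
  have hR0 : (0:ℝ) < R := lt_of_lt_of_le one_pos hR
  have hRne : R ≠ 0 := ne_of_gt hR0
  have hq0 : (0:ℝ) < q := hpq.symm.pos
  set D : ℝ := ((m:ℝ)^2*(M+1)^2 * (1+H) / (R*c))^q / q with hD_def
  have hDnn : 0 ≤ D := by positivity
  have hw := hweak (st11phi H R m) (st11phi_contDiff H R m)
    (st11phi_compactSupport hR0 H hm)
  rw [st11phi_zero hR0 H m, st11phi_deriv_zero hR0 H hm] at hw
  -- rewrite the integrand
  have hint_eq : ∫ t in Ici (0:ℝ),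
      (Y t * deriv (deriv (st11phi H R m)) t - H^2 * Y t * st11phi H R m t
        + lam * |Y t|^p * st11phi H R m t)
      = ∫ t in Ici (0:ℝ), (Y t * st11G H R m t + lam * (|Y t|^p * st11F H R m t)) := by
    apply setIntegral_congr_fun measurableSet_Ici
    intro t ht
    dsimp only
    have ht' : (-1:ℝ) < t := lt_of_lt_of_le (by norm_num) ht
    rw [st11phi_deriv2 H hRne hm ht', st11phi_eqF H R m ht', st11G_eq]
    ring
  rw [hint_eq] at hw
  -- integrability
  have hGz : ∀ t, 2*R+1 ≤ t → st11G H R m t = 0 := fun t ht =>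
    st11G_zero hR0 H m (by linarith)
  have hIntYG : IntegrableOn (fun t => Y t * st11G H R m t) (Ici (0:ℝ)) :=
    st11_integrable_aux hloc (st11G_continuous H R m) (by linarith : (0:ℝ) < 2*R+1) hGz
  have hFz : ∀ t, 2*R+1 ≤ t → st11F H R m t = 0 := fun t ht => by
    rw [st11F, st11u_eq_zero hR0 hm (by linarith), mul_zero]
  have hIntPF : IntegrableOn (fun t => |Y t|^p * st11F H R m t) (Ici (0:ℝ)) :=
    st11_integrable_aux hlocp (st11F_continuous H R m) (by linarith : (0:ℝ) < 2*R+1) hFz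
  set I : ℝ := ∫ t in Ici (0:ℝ), |Y t|^p * st11F H R m t with hI_def
  have hsplit : ∫ t in Ici (0:ℝ),
      (Y t * st11G H R m t + lam * (|Y t|^p * st11F H R m t))
      = (∫ t in Ici (0:ℝ), Y t * st11G H R m t) + lam * I := by
    rw [integral_add hIntYG (hIntPF.const_mul lam), integral_const_mul]
  rw [hsplit] at hw
  -- step 1 : lam * I ≤ ∫ |Y G|
  have h1 : lam * I ≤ ∫ t in Ici (0:ℝ), |Y t * st11G H R m t| := by
    have habs : |∫ t in Ici (0:ℝ), Y t * st11G H R m t|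
        ≤ ∫ t in Ici (0:ℝ), |Y t * st11G H R m t| := by
      have := norm_integral_le_integral_norm (μ := volume.restrict (Ici (0:ℝ)))
        (fun t => Y t * st11G H R m t)
      simpa only [Real.norm_eq_abs] using this
    have hneg : -(∫ t in Ici (0:ℝ), Y t * st11G H R m t)
        ≤ |∫ t in Ici (0:ℝ), Y t * st11G H R m t| := neg_le_abs _
    nlinarith [hw, hdata]
  -- step 2 : pointwise bound and integration
  have hIndInt : Integrable
      (fun t => Set.indicator (Icc R (2*R)) (fun _ => D) t)
      (volume.restrict (Ici (0:ℝ))) := by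
    rw [integrable_indicator_iff measurableSet_Icc]
    apply (integrableOn_const_iff (C := D)).mpr
    right
    exact lt_of_le_of_lt (Measure.restrict_apply_le _ _) measure_Icc_lt_top
  have hRHSint : Integrable
      (fun t => lam/2 * (|Y t|^p * st11F H R m t)
        + Set.indicator (Icc R (2*R)) (fun _ => D) t)
      (volume.restrict (Ici (0:ℝ))) :=
    (hIntPF.const_mul (lam/2)).add hIndInt
  have h2 : ∫ t in Ici (0:ℝ), |Y t * st11G H R m t|
      ≤ ∫ t in Ici (0:ℝ), (lam/2 * (|Y t|^p * st11F H R m t)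
        + Set.indicator (Icc R (2*R)) (fun _ => D) t) := by
    apply setIntegral_mono_on hIntYG.abs hRHSint measurableSet_Ici
    intro t ht
    exact st11_pointwise hH hlam hpq hM hMb hc hcp hm3 hmp hR (Y t) ht
  have h3 : ∫ t in Ici (0:ℝ), (lam/2 * (|Y t|^p * st11F H R m t)
      + Set.indicator (Icc R (2*R)) (fun _ => D) t) = lam/2 * I + D * R := by
    rw [integral_add (hIntPF.const_mul (lam/2)) hIndInt, integral_const_mul,
      integral_indicator_const _ measurableSet_Icc]
    have hmeas : (volume.restrict (Ici (0:ℝ))) (Icc R (2*R)) = ENNReal.ofReal R := by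
      have hsub : Icc R (2*R) ⊆ Ici (0:ℝ) := fun x hx => le_trans hR0.le hx.1
      rw [Measure.restrict_apply measurableSet_Icc,
        inter_eq_self_of_subset_left hsub, Real.volume_Icc]
      congr 1
      ring
    rw [measureReal_def, hmeas, ENNReal.toReal_ofReal hR0.le, smul_eq_mul]
    ring
  rw [h3] at h2
  have hfin : lam/2 * I ≤ D * R := by linarith
  calc I = (2/lam) * (lam/2 * I) := by field_simp
    _ ≤ (2/lam) * (D * R) := mul_le_mul_of_nonneg_left hfin (by positivity)
    _ = (2/lam) * ((((m:ℝ)^2*(M+1)^2*(1+H)/c)^q / q)) * R^(1-q) := by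
        rw [hD_def]
        have hsplitpow : ((m:ℝ)^2*(M+1)^2 * (1+H) / (R*c))^q
            = ((m:ℝ)^2*(M+1)^2 * (1+H) / c)^q / R^q := by
          rw [show (m:ℝ)^2*(M+1)^2 * (1+H) / (R*c)
              = ((m:ℝ)^2*(M+1)^2 * (1+H) / c) / R by ring,
            Real.div_rpow (by positivity) hR0.le]
        rw [hsplitpow, Real.rpow_sub hR0, Real.rpow_one]
        have hRq : R^q ≠ 0 := ne_of_gt (Real.rpow_pos_of_pos hR0 q)
        field_simp
set_option maxHeartbeats 1000000 in
/-- Nonexistence of nontrivial global weak solutions of `D_t²Y - H²Y + λ|Y|^p = 0` on `[0,∞)`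
in the de Sitter spacetime: if `HY₀ + Y₁ ≤ 0`, any global weak solution vanishes a.e. -/
theorem stmt_11 (H lam p : ℝ) (hH : 0 ≤ H) (hlam : 0 < lam) (hp : 1 < p)
    (Y₀ Y₁ : ℝ) (Y : ℝ → ℝ)
    (hloc : LocallyIntegrableOn Y (Ici (0 : ℝ)))
    (hlocp : LocallyIntegrableOn (fun t => |Y t| ^ p) (Ici (0 : ℝ)))
    (hweak : ∀ φ : ℝ → ℝ, ContDiff ℝ 2 φ → HasCompactSupport φ →
      -Y₁ * φ 0 + Y₀ * deriv φ 0 +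
        ∫ t in Ici (0 : ℝ),
          (Y t * deriv (deriv φ) t - H ^ 2 * Y t * φ t + lam * |Y t| ^ p * φ t) = 0)
    (hdata : H * Y₀ + Y₁ ≤ 0) :
    ∀ᵐ t ∂(volume.restrict (Ici (0 : ℝ))), Y t = 0 := by
  have hp0 : (0:ℝ) < p := lt_trans one_pos hp
  set q := Real.conjExponent p with hq_def
  have hpq : p.HolderConjugate q := Real.HolderConjugate.conjExponent hp
  have hq1 : 1 < q := hpq.symm.lt
  obtain ⟨M, hM, hMb⟩ := st11_exists_bound
  set c : ℝ := (lam * p / 2) ^ (1/p : ℝ) with hc_def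
  have hc : 0 < c := Real.rpow_pos_of_pos (by positivity) _
  have hcp : c ^ p = lam * p / 2 := by
    rw [hc_def, one_div, Real.rpow_inv_rpow (by positivity) (ne_of_gt hp0)]
  set m : ℕ := ⌈2*q⌉₊ + 3 with hm_def
  have hm3 : 3 ≤ m := by omega
  have hmq : 2*q ≤ (m:ℝ) := by
    refine le_trans (Nat.le_ceil _) ?_
    rw [hm_def]
    push_cast
    linarith
  have hmp : (m:ℝ)/p ≤ (m:ℝ) - 2 := by
    have hqe : q = p / (p-1) := hpq.conjugate_eq
    have hp1 : (0:ℝ) < p - 1 := by linarith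
    have h1 : 2*(p/(p-1)) ≤ (m:ℝ) := by rw [← hqe]; exact hmq
    have h2 : 2*p ≤ (m:ℝ)*(p-1) := by
      have h1' : 2*p/(p-1) ≤ (m:ℝ) := by rw [mul_div_assoc]; exact h1
      have := (div_le_iff₀ hp1).mp h1'
      linarith
    rw [div_le_iff₀ hp0]
    nlinarith
  -- a.e. vanishing on each Icc 0 n
  have hZ : ∀ n : ℕ, ∀ᵐ t ∂(volume.restrict (Icc (0:ℝ) (n:ℝ))), Y t = 0 := by
    intro n
    set E : ℝ := (2/lam) * (((m:ℝ)^2*(M+1)^2*(1+H)/c)^q / q) with hE_def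
    set Jn : ℝ := ∫ t in Icc (0:ℝ) (n:ℝ), |Y t|^p * Real.exp (-H * t) with hJ_def
    have hJint : IntegrableOn (fun t => |Y t|^p * Real.exp (-H*t)) (Icc (0:ℝ) (n:ℝ)) :=
      (hlocp.integrableOn_compact_subset Icc_subset_Ici_self isCompact_Icc).mul_continuousOn
        (Continuous.continuousOn (by fun_prop)) isCompact_Icc
    have hJnonneg : ∀ t ∈ Icc (0:ℝ) (n:ℝ), 0 ≤ |Y t|^p * Real.exp (-H*t) := fun t _ =>
      mul_nonneg (Real.rpow_nonneg (abs_nonneg _) _) (Real.exp_nonneg _)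
    have hJle : ∀ R : ℝ, max (n:ℝ) 1 ≤ R → Jn ≤ E * R^(1-q) := by
      intro R hRge
      have hR1 : (1:ℝ) ≤ R := le_trans (le_max_right _ _) hRge
      have hRn : (n:ℝ) ≤ R := le_trans (le_max_left _ _) hRge
      have hR0 : (0:ℝ) < R := lt_of_lt_of_le one_pos hR1
      have hm : 2 ≤ m := by omega
      have hkey := st11_key hH hlam hpq hM hMb hc hcp hm3 hmp hloc hlocp hweak hdata hR1
      rw [hE_def]
      refine le_trans ?_ hkey
      have hJeq : Jn = ∫ t in Icc (0:ℝ) (n:ℝ), |Y t|^p * st11F H R m t := by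
        apply setIntegral_congr_fun measurableSet_Icc
        intro t ht
        dsimp only
        rw [st11F, st11u_eq_one hR0 m (le_trans ht.2 hRn), mul_one]
      rw [hJeq]
      have hFz : ∀ t, 2*R+1 ≤ t → st11F H R m t = 0 := fun t ht => by
        rw [st11F, st11u_eq_zero hR0 hm (by linarith), mul_zero]
      have hIntPF : IntegrableOn (fun t => |Y t|^p * st11F H R m t) (Ici (0:ℝ)) :=
        st11_integrable_aux hlocp (st11F_continuous H R m) (by linarith : (0:ℝ) < 2*R+1) hFz
      apply setIntegral_mono_set hIntPF
      · exact Filter.Eventually.of_forall fun t =>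
          mul_nonneg (Real.rpow_nonneg (abs_nonneg _) _) (st11F_nonneg H R m t)
      · exact HasSubset.Subset.eventuallyLE Icc_subset_Ici_self
    have htend : Filter.Tendsto (fun R : ℝ => E * R^(1-q)) Filter.atTop (nhds 0) := by
      have h0 : Filter.Tendsto (fun R : ℝ => R^(1-q)) Filter.atTop (nhds 0) := by
        have h1q : (1 - q) = -(q-1) := by ring
        rw [h1q]
        exact tendsto_rpow_neg_atTop (by linarith)
      simpa using h0.const_mul E
    have hJ0 : Jn ≤ 0 := by
      apply ge_of_tendsto htend
      filter_upwards [Filter.eventually_ge_atTop (max (n:ℝ) 1)] with R hRge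
      exact hJle R hRge
    have hJnn : 0 ≤ Jn := setIntegral_nonneg measurableSet_Icc hJnonneg
    have hJz : Jn = 0 := le_antisymm hJ0 hJnn
    have hae : (fun t => |Y t|^p * Real.exp (-H*t))
        =ᵐ[volume.restrict (Icc (0:ℝ) (n:ℝ))] 0 := by
      refine (setIntegral_eq_zero_iff_of_nonneg_ae ?_ hJint).mp hJz
      filter_upwards [ae_restrict_mem measurableSet_Icc] with t ht
      exact hJnonneg t ht
    filter_upwards [hae] with t ht2
    have hexp : Real.exp (-H*t) ≠ 0 := Real.exp_ne_zero _
    have habs : |Y t|^p = 0 := by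
      rcases mul_eq_zero.mp ht2 with h | h
      · exact h
      · exact absurd h hexp
    have : |Y t| = 0 := by
      by_contra hne
      have hpos : 0 < |Y t| := lt_of_le_of_ne (abs_nonneg _) (Ne.symm hne)
      exact absurd habs (ne_of_gt (Real.rpow_pos_of_pos hpos p))
    exact abs_eq_zero.mp this
  have hun : Ici (0:ℝ) = ⋃ n : ℕ, Icc (0:ℝ) (n:ℝ) := by
    ext x
    simp only [mem_Ici, mem_iUnion, mem_Icc]
    constructor
    · intro hx
      obtain ⟨n, hn⟩ := exists_nat_ge x
      exact ⟨n, hx, hn⟩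
    · rintro ⟨n, h1, _⟩
      exact h1
  rw [hun]
  exact (ae_restrict_iUnion_iff _ _).2 fun n => hZ n
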